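/- If p, q, r, s are primes, each congruent to 1 modulo 4, and φ_p + φ_q = φ_r + φ_s, then {p, q} = {r, s} as multisets (i.e. either p = r and q = s, or p = s and q = r). -/

import Mathlib

private lemma stmt2_aux (up vp uq vq ur vr us vs : ℝ)
    (hup : 0 < up) (huq : 0 < uq) (hur : 0 < ur) (hus : 0 < us)
    (heq2 : (vp/up + vq/uq) * (1 - (vr/ur) * (vs/us)) = ((vr/ur) + vs/us) * (1 - (vp/up) * (vq/uq))) :
    (up*vq + vp*uq) * (ur*us - vr*vs) = (ur*vs + vr*us) * (up*uq - vp*vq) := by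
  field_simp at heq2
  have hK : up*uq*(ur*us) ≠ 0 := by positivity
  refine mul_right_cancel₀ hK ?_
  linear_combination (up*uq*(ur*us)) * heq2

set_option maxHeartbeats 1600000

theorem stmt2 (u v : ℕ → ℕ) (φ : ℕ → ℝ)
    (hφ : ∀ p : ℕ, p.Prime → p % 4 = 1 →
      0 < v p ∧ v p < u p ∧ p = (u p) ^ 2 + (v p) ^ 2 ∧
      φ p = (1 / Real.pi) * Real.arctan ((v p : ℝ) / (u p : ℝ)))
    (p q r s : ℕ)
    (hp : p.Prime) (hp4 : p % 4 = 1)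
    (hq : q.Prime) (hq4 : q % 4 = 1)
    (hr : r.Prime) (hr4 : r % 4 = 1)
    (hs : s.Prime) (hs4 : s % 4 = 1)
    (h : φ p + φ q = φ r + φ s) :
    (p = r ∧ q = s) ∨ (p = s ∧ q = r) := by
  obtain ⟨hvp, hvup, hpsum, hφp⟩ := hφ p hp hp4
  obtain ⟨hvq, hvuq, hqsum, hφq⟩ := hφ q hq hq4
  obtain ⟨hvr, hvur, hrsum, hφr⟩ := hφ r hr hr4
  obtain ⟨hvs, hvus, hssum, hφs⟩ := hφ s hs hs4
  -- real variables
  set a : ℝ := (v p : ℝ) / (u p : ℝ) with ha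
  set b : ℝ := (v q : ℝ) / (u q : ℝ) with hb
  set c : ℝ := (v r : ℝ) / (u r : ℝ) with hc
  set d : ℝ := (v s : ℝ) / (u s : ℝ) with hd
  have hup : (0:ℝ) < u p := by exact_mod_cast hvp.trans hvup
  have huq : (0:ℝ) < u q := by exact_mod_cast hvq.trans hvuq
  have hur : (0:ℝ) < u r := by exact_mod_cast hvr.trans hvur
  have hus : (0:ℝ) < u s := by exact_mod_cast hvs.trans hvus
  have ha0 : 0 < a := div_pos (by exact_mod_cast hvp) hup
  have hb0 : 0 < b := div_pos (by exact_mod_cast hvq) huq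
  have hc0 : 0 < c := div_pos (by exact_mod_cast hvr) hur
  have hd0 : 0 < d := div_pos (by exact_mod_cast hvs) hus
  have ha1 : a < 1 := (div_lt_one hup).mpr (by exact_mod_cast hvup)
  have hb1 : b < 1 := (div_lt_one huq).mpr (by exact_mod_cast hvuq)
  have hc1 : c < 1 := (div_lt_one hur).mpr (by exact_mod_cast hvur)
  have hd1 : d < 1 := (div_lt_one hus).mpr (by exact_mod_cast hvus)
  have hab : a * b < 1 := by nlinarith
  have hcd : c * d < 1 := by nlinarith
  have harc : Real.arctan a + Real.arctan b = Real.arctan c + Real.arctan d := by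
    rw [hφp, hφq, hφr, hφs] at h
    have hπ : Real.pi ≠ 0 := Real.pi_ne_zero
    field_simp at h
    linarith
  rw [Real.arctan_add hab, Real.arctan_add hcd] at harc
  have heq : (a + b) / (1 - a * b) = (c + d) / (1 - c * d) := Real.arctan_injective harc
  have heq2 : (a + b) * (1 - c * d) = (c + d) * (1 - a * b) := by
    rw [div_eq_div_iff (by linarith) (by linarith)] at heq
    linarith [heq]
  -- integer quantities
  set A : ℤ := (u p : ℤ) * u q - v p * v q with hA
  set B : ℤ := (u p : ℤ) * v q + v p * u q with hB
  set C : ℤ := (u r : ℤ) * u s - v r * v s with hC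
  set D : ℤ := (u r : ℤ) * v s + v r * u s with hD
  have hBC : B * C = A * D := by
    have hreal : ((u p : ℝ)*(v q) + (v p)*(u q)) * ((u r : ℝ)*(u s) - (v r)*(v s)) =
        ((u r : ℝ)*(v s) + (v r)*(u s)) * ((u p : ℝ)*(u q) - (v p)*(v q)) := by
      rw [ha, hb, hc, hd] at heq2
      exact stmt2_aux _ _ _ _ _ _ _ _ hup huq hur hus heq2
    rw [hA, hB, hC, hD]
    exact_mod_cast hreal.trans (mul_comm _ _)
  have hA0 : 0 < A := by
    have h1 : (v p : ℤ) < u p := by exact_mod_cast hvup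
    have h2 : (v q : ℤ) < u q := by exact_mod_cast hvuq
    have h3 : (0:ℤ) < v p := by exact_mod_cast hvp
    have h4 : (0:ℤ) < v q := by exact_mod_cast hvq
    have key := mul_lt_mul'' h1 h2 h3.le h4.le
    rw [hA]; exact sub_pos.mpr (by linarith [key])
  have hB0 : 0 < B := by
    have h1 : (0:ℤ) < u p := by exact_mod_cast hvp.trans hvup
    have h3 : (0:ℤ) < v p := by exact_mod_cast hvp
    have h4 : (0:ℤ) < v q := by exact_mod_cast hvq
    have h2 : (0:ℤ) < u q := by exact_mod_cast hvq.trans hvuq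
    rw [hB]; exact add_pos (mul_pos h1 h4) (mul_pos h3 h2)
  have hC0 : 0 < C := by
    have h1 : (v r : ℤ) < u r := by exact_mod_cast hvur
    have h2 : (v s : ℤ) < u s := by exact_mod_cast hvus
    have h3 : (0:ℤ) < v r := by exact_mod_cast hvr
    have h4 : (0:ℤ) < v s := by exact_mod_cast hvs
    have key := mul_lt_mul'' h1 h2 h3.le h4.le
    rw [hC]; exact sub_pos.mpr (by linarith [key])
  have hD0 : 0 < D := by
    have h1 : (0:ℤ) < u r := by exact_mod_cast hvr.trans hvur
    have h2 : (0:ℤ) < u s := by exact_mod_cast hvs.trans hvus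
    have h3 : (0:ℤ) < v r := by exact_mod_cast hvr
    have h4 : (0:ℤ) < v s := by exact_mod_cast hvs
    rw [hD]; exact add_pos (mul_pos h1 h4) (mul_pos h3 h2)
  -- A^2 + B^2 = p*q, C^2 + D^2 = r*s
  have hABpq : A ^ 2 + B ^ 2 = (p : ℤ) * q := by
    have hp' : (p : ℤ) = (u p : ℤ)^2 + (v p : ℤ)^2 := by exact_mod_cast hpsum
    have hq' : (q : ℤ) = (u q : ℤ)^2 + (v q : ℤ)^2 := by exact_mod_cast hqsum
    rw [hA, hB, hp', hq']; ring
  have hCDrs : C ^ 2 + D ^ 2 = (r : ℤ) * s := by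
    have hr' : (r : ℤ) = (u r : ℤ)^2 + (v r : ℤ)^2 := by exact_mod_cast hrsum
    have hs' : (s : ℤ) = (u s : ℤ)^2 + (v s : ℤ)^2 := by exact_mod_cast hssum
    rw [hC, hD, hr', hs']; ring
  -- coprimality helper
  have key : ∀ (x y : ℕ), x.Prime → y.Prime → x % 4 = 1 → y % 4 = 1 →
      ∀ (E F : ℤ), E = (u x : ℤ) * u y - v x * v y → F = (u x : ℤ) * v y + v x * u y →
      0 < v x → v x < u x → x = u x ^ 2 + v x ^ 2 →
      0 < v y → v y < u y → y = u y ^ 2 + v y ^ 2 →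
      IsCoprime E F := by
    intro x y hx hy hx4 hy4 E F hE hF hvx hvux hxsum hvy hvuy hysum
    rw [Int.isCoprime_iff_gcd_eq_one]
    by_contra hg
    obtain ⟨ℓ, hℓ, hℓg⟩ := Nat.exists_prime_and_dvd hg
    have hℓE : (ℓ : ℤ) ∣ E := dvd_trans (Int.natCast_dvd_natCast.mpr hℓg) (Int.gcd_dvd_left E F)
    have hℓF : (ℓ : ℤ) ∣ F := dvd_trans (Int.natCast_dvd_natCast.mpr hℓg) (Int.gcd_dvd_right E F)
    have hEF : E ^ 2 + F ^ 2 = (x : ℤ) * y := by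
      have hx' : (x : ℤ) = (u x : ℤ)^2 + (v x : ℤ)^2 := by exact_mod_cast hxsum
      have hy' : (y : ℤ) = (u y : ℤ)^2 + (v y : ℤ)^2 := by exact_mod_cast hysum
      rw [hE, hF, hx', hy']; ring
    have hℓ2 : (ℓ : ℤ) ^ 2 ∣ (x : ℤ) * y := by
      rw [← hEF]; exact dvd_add (pow_dvd_pow_of_dvd hℓE 2) (pow_dvd_pow_of_dvd hℓF 2)
    have hℓ2' : ℓ ^ 2 ∣ x * y := by exact_mod_cast hℓ2
    have hℓxy : ℓ ∣ x * y := dvd_trans (dvd_pow_self ℓ two_ne_zero) hℓ2'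
    have hℓx : ℓ = x ∨ ℓ = y := by
      rcases (Nat.Prime.dvd_mul hℓ).mp hℓxy with h' | h'
      · exact Or.inl ((Nat.prime_dvd_prime_iff_eq hℓ hx).mp h')
      · exact Or.inr ((Nat.prime_dvd_prime_iff_eq hℓ hy).mp h')
    have hmain : ℓ = x ∧ x = y := by
      rcases hℓx with h' | h'
      · refine ⟨h', ?_⟩
        have hx2 : x ^ 2 ∣ x * y := h' ▸ hℓ2'
        have hxy' : x ∣ y := by
          rw [pow_two] at hx2
          exact (Nat.mul_dvd_mul_iff_left hx.pos).mp hx2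
        exact (Nat.prime_dvd_prime_iff_eq hx hy).mp hxy'
      · have hy2 : y ^ 2 ∣ x * y := h' ▸ hℓ2'
        have hyx' : y ∣ x := by
          rw [pow_two, mul_comm x y] at hy2
          exact (Nat.mul_dvd_mul_iff_left hy.pos).mp hy2
        have hxy : x = y := ((Nat.prime_dvd_prime_iff_eq hy hx).mp hyx').symm
        exact ⟨h'.trans hxy.symm, hxy⟩
    obtain ⟨hℓeq, hxyeq⟩ := hmain
    have hxF : (x : ℤ) ∣ F := hℓeq ▸ hℓF
    have hF2 : F = 2 * ((u x : ℤ) * v x) := by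
      rw [hF, ← hxyeq]; ring
    have hxint : Prime (x : ℤ) := Nat.prime_iff_prime_int.mp hx
    rw [hF2] at hxF
    rcases hxint.dvd_mul.mp hxF with h' | h'
    · have h2 : x ∣ 2 := by exact_mod_cast h'
      have hle := Nat.le_of_dvd (by norm_num) h2
      have := hx.two_le
      omega
    · rcases hxint.dvd_mul.mp h' with h'' | h''
      · have hd : x ∣ u x := by exact_mod_cast h''
        have husq : u x ≤ u x * u x := Nat.le_mul_of_pos_left _ (by omega)
        have hvsq : 1 ≤ v x * v x := Nat.mul_pos hvx hvx
        have hsq : u x ^ 2 + v x ^ 2 = u x * u x + v x * v x := by ring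
        have hux_lt : u x < x := by omega
        have := Nat.le_of_dvd (by omega) hd
        omega
      · have hd : x ∣ v x := by exact_mod_cast h''
        have hvsq' : v x ≤ v x * v x := Nat.le_mul_of_pos_left _ hvx
        have husq' : 1 ≤ u x * u x := Nat.mul_pos (by omega) (by omega)
        have hsq : u x ^ 2 + v x ^ 2 = u x * u x + v x * v x := by ring
        have hvx_lt : v x < x := by omega
        have := Nat.le_of_dvd hvx hd
        omega
  have hcopAB : IsCoprime A B := key p q hp hq hp4 hq4 A B hA hB hvp hvup hpsum hvq hvuq hqsum
  have hcopCD : IsCoprime C D := key r s hr hs hr4 hs4 C D hC hD hvr hvur hrsum hvs hvus hssum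
  -- A = C and B = D
  have hAC : A = C := by
    have h1 : A ∣ C := hcopAB.dvd_of_dvd_mul_left ⟨D, hBC⟩
    have h2 : C ∣ A := hcopCD.dvd_of_dvd_mul_right ⟨B, by rw [← hBC]; ring⟩
    exact Int.dvd_antisymm hA0.le hC0.le h1 h2
  have hBD : B = D := by
    have : A * B = A * D := by rw [← hBC, hAC]; ring
    exact mul_left_cancel₀ hA0.ne' this
  have hpqrs : p * q = r * s := by
    have : (p : ℤ) * q = (r : ℤ) * s := by rw [← hABpq, ← hCDrs, hAC, hBD]
    exact_mod_cast this
  -- conclude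
  have hpdvd : p ∣ r * s := ⟨q, hpqrs.symm⟩
  rcases (Nat.Prime.dvd_mul hp).mp hpdvd with h' | h'
  · have hpr : p = r := (Nat.prime_dvd_prime_iff_eq hp hr).mp h'
    left
    refine ⟨hpr, ?_⟩
    subst hpr
    exact Nat.eq_of_mul_eq_mul_left hp.pos hpqrs
  · have hps : p = s := (Nat.prime_dvd_prime_iff_eq hp hs).mp h'
    right
    refine ⟨hps, ?_⟩
    subst hps
    have : p * q = p * r := by rw [hpqrs]; ring
    exact Nat.eq_of_mul_eq_mul_left hp.pos this
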